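/- Let H be an invertible n×n complex Hermitian matrix, let γ be an n×n matrix with real entries satisfying γ† = γ and γ² = 1, and let C be an n×n unitary matrix satisfying C H C⁻¹ = -H* (charge-conjugation symmetry) and C γ = -γ C. Then the operator V = γ · sgn(H) satisfies C V C⁻¹ = V*, where M* denotes entrywise complex conjugation. -/

import Mathlib

open Matrix
open scoped ComplexOrder

/-- The positive semidefinite square root of a positive semidefinite matrix
(the definition `Matrix.PosSemidef.sqrt` of the older Mathlib, since removed). -/
noncomputable def Matrix.PosSemidef.sqrt {𝕜 : Type*} [RCLike 𝕜] {n : Type*} [Fintype n]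
    [DecidableEq n] {A : Matrix n n 𝕜} (hA : A.PosSemidef) : Matrix n n 𝕜 :=
  (hA.1.eigenvectorUnitary : Matrix n n 𝕜) *
    diagonal ((↑) ∘ (√·) ∘ hA.1.eigenvalues : n → 𝕜) *
    (star hA.1.eigenvectorUnitary : Matrix n n 𝕜)

section PortHelpers
open scoped MatrixOrder

theorem Matrix.PosSemidef.sqrt_eq_cfc_sqrt {n : Type*} [Fintype n] [DecidableEq n]
    {A : Matrix n n ℂ} (hA : A.PosSemidef) : hA.sqrt = CFC.sqrt A := by
  rw [CFC.sqrt_eq_cfc, cfc_nnreal_eq_real _ A (ha := hA.nonneg), hA.1.cfc_eq]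
  simp only [IsHermitian.cfc, Matrix.PosSemidef.sqrt, Unitary.conjStarAlgAut_apply]
  congr 3
  funext i
  simp [Real.coe_sqrt, Real.coe_toNNReal', hA.eigenvalues_nonneg i]

theorem Matrix.PosSemidef.posSemidef_sqrt {n : Type*} [Fintype n] [DecidableEq n]
    {A : Matrix n n ℂ} (hA : A.PosSemidef) : hA.sqrt.PosSemidef := by
  rw [hA.sqrt_eq_cfc_sqrt]; exact (CFC.sqrt_nonneg A).posSemidef

theorem Matrix.PosSemidef.sqrt_mul_self {n : Type*} [Fintype n] [DecidableEq n]
    {A : Matrix n n ℂ} (hA : A.PosSemidef) : hA.sqrt * hA.sqrt = A := by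
  rw [hA.sqrt_eq_cfc_sqrt]; exact CFC.sqrt_mul_sqrt_self A hA.nonneg

theorem Matrix.PosSemidef.sq_sqrt {n : Type*} [Fintype n] [DecidableEq n]
    {A : Matrix n n ℂ} (hA : A.PosSemidef) : hA.sqrt ^ 2 = A := by
  rw [pow_two, hA.sqrt_mul_self]

theorem Matrix.PosSemidef.eq_sqrt_of_sq_eq {n : Type*} [Fintype n] [DecidableEq n]
    {B : Matrix n n ℂ} (hB : B.PosSemidef) {A : Matrix n n ℂ} (hA : A.PosSemidef)
    (h : B ^ 2 = A) : B = hA.sqrt := by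
  rw [hA.sqrt_eq_cfc_sqrt]
  exact (CFC.sqrt_unique (by rw [← pow_two, h]) hB.nonneg).symm

end PortHelpers

/-- The matrix sign `sgn H = H * (√(H²))⁻¹` of a Hermitian matrix, where `√(H²)` is the
positive semidefinite square root of `H²`. -/
noncomputable def matrixSign {n : ℕ} (H : Matrix (Fin n) (Fin n) ℂ) (hH : H.IsHermitian) :
    Matrix (Fin n) (Fin n) ℂ :=
  H * ((show (H * H).PosSemidef by
      simpa [hH.eq] using Matrix.posSemidef_conjTranspose_mul_self H).sqrt)⁻¹

theorem stmt_10 {n : ℕ} (H : Matrix (Fin n) (Fin n) ℂ)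
    (hH : H.IsHermitian) (hHinv : IsUnit H.det)
    (γ : Matrix (Fin n) (Fin n) ℂ) (hγreal : ∀ i j, (γ i j).im = 0)
    (hγherm : γᴴ = γ) (hγ2 : γ * γ = 1)
    (C : Matrix (Fin n) (Fin n) ℂ) (hC : Cᴴ * C = 1 ∧ C * Cᴴ = 1)
    (hCH : C * H * C⁻¹ = -(H.map (starRingEnd ℂ))) (hCγ : C * γ = -(γ * C))
    (V : Matrix (Fin n) (Fin n) ℂ) (hV : V = γ * matrixSign H hH) :
    C * V * C⁻¹ = V.map (starRingEnd ℂ) := by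
  have P : (H * H).PosSemidef := (show (H * H).PosSemidef by
      simpa [hH.eq] using Matrix.posSemidef_conjTranspose_mul_self H)
  set S : Matrix (Fin n) (Fin n) ℂ := P.sqrt with hSdef
  have hsgn : matrixSign H hH = H * S⁻¹ := rfl
  have hCinv : C⁻¹ = Cᴴ := Matrix.inv_eq_left_inv hC.1
  have hCHinv : Cᴴ⁻¹ = C := Matrix.inv_eq_left_inv (by
    simpa using congrArg conjTranspose hC.2)
  -- entrywise conjugation as transpose of conjTranspose
  have hmap : ∀ M : Matrix (Fin n) (Fin n) ℂ, M.map (starRingEnd ℂ) = Mᴴᵀ := by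
    intro M; ext i j; simp [conjTranspose_apply, transpose_apply]
  -- multiplicativity of conjugation by C
  have key : ∀ A B : Matrix (Fin n) (Fin n) ℂ,
      (C * A * Cᴴ) * (C * B * Cᴴ) = C * (A * B) * Cᴴ := by
    intro A B
    have h1 : Cᴴ * (C * (B * Cᴴ)) = B * Cᴴ := by
      rw [← Matrix.mul_assoc, hC.1, one_mul]
    calc (C * A * Cᴴ) * (C * B * Cᴴ) = C * (A * (Cᴴ * (C * (B * Cᴴ)))) := by
          simp only [Matrix.mul_assoc]
      _ = C * (A * (B * Cᴴ)) := by rw [h1]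
      _ = C * (A * B) * Cᴴ := by simp only [Matrix.mul_assoc]
  have hCH' : C * H * Cᴴ = -(H.map (starRingEnd ℂ)) := by rw [← hCinv]; exact hCH
  have hCHH : C * (H * H) * Cᴴ = (H * H).map (starRingEnd ℂ) := by
    rw [← key H H, hCH', neg_mul_neg, Matrix.map_mul]
  -- the conjugated square root
  have hQ : ((H * H).map (starRingEnd ℂ)).PosSemidef := by
    rw [← hCHH]; exact P.mul_mul_conjTranspose_same C
  have hSH : Sᴴ = S := P.posSemidef_sqrt.1
  have hSstar : S.map (starRingEnd ℂ) = Sᵀ := by rw [hmap, hSH]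
  have hA1 : C * S * Cᴴ = hQ.sqrt := by
    refine (P.posSemidef_sqrt.mul_mul_conjTranspose_same C).eq_sqrt_of_sq_eq hQ ?_
    rw [pow_two, key S S, P.sqrt_mul_self, hCHH]
  have hA2 : S.map (starRingEnd ℂ) = hQ.sqrt := by
    rw [hSstar]
    refine (P.posSemidef_sqrt.transpose).eq_sqrt_of_sq_eq hQ ?_
    rw [pow_two, ← Matrix.transpose_mul, ← pow_two, P.sq_sqrt, hmap, P.1]
  have hCS : C * S * Cᴴ = S.map (starRingEnd ℂ) := by rw [hA1, hA2]
  -- inverse version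
  have hCSinv : C * S⁻¹ * Cᴴ = (S⁻¹).map (starRingEnd ℂ) := by
    have h1 : (C * S * Cᴴ)⁻¹ = (S.map (starRingEnd ℂ))⁻¹ := by rw [hCS]
    rw [Matrix.mul_inv_rev, Matrix.mul_inv_rev, hCHinv, hCinv, ← Matrix.mul_assoc] at h1
    have h2 : (S.map (starRingEnd ℂ))⁻¹ = (S⁻¹).map (starRingEnd ℂ) := by
      rw [hmap, hmap, Matrix.conjTranspose_nonsing_inv, Matrix.transpose_nonsing_inv]
    rw [h1, h2]
  -- C γ Cᴴ = -γ
  have hCγ' : C * γ * Cᴴ = -γ := by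
    rw [hCγ, neg_mul, Matrix.mul_assoc, hC.2, mul_one]
  -- conjugate of γ is γ
  have hγstar : γ.map (starRingEnd ℂ) = γ := by
    ext i j
    simp only [map_apply]
    exact Complex.ext rfl (by simp [hγreal i j])
  -- put it all together
  rw [hV, hsgn, hCinv]
  calc C * (γ * (H * S⁻¹)) * Cᴴ
      = (C * γ * Cᴴ) * (C * (H * S⁻¹) * Cᴴ) := (key γ (H * S⁻¹)).symm
    _ = (C * γ * Cᴴ) * ((C * H * Cᴴ) * (C * S⁻¹ * Cᴴ)) := by rw [key H S⁻¹]
    _ = (-γ) * (-(H.map (starRingEnd ℂ)) * (S⁻¹).map (starRingEnd ℂ)) := by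
        rw [hCγ', hCH', hCSinv]
    _ = γ * ((H * S⁻¹).map (starRingEnd ℂ)) := by
        simp only [neg_mul, mul_neg, neg_neg, Matrix.map_mul]
    _ = (γ * (H * S⁻¹)).map (starRingEnd ℂ) := by
        conv_rhs => rw [Matrix.map_mul, hγstar]
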